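/- Let A ⊆ ℤ. The following are equivalent: (i) A is sufficiently sparse, i.e. δ̲(Σ_n(±A) ∩ ℕ) = 0 for every n ≥ 1; (ii) for every n ≥ 1, Σ_n(±A) does not contain mℤ for any integer m ≥ 1; (iii) for every n ≥ 1, Σ_n(±A) does not contain any coset mℤ + r with m ≥ 1. -/

import Mathlib

open Filter Pointwise

/-- The `k`-fold sumset `X + ⋯ + X` (`k` times) of a set of integers. -/
def kFold (X : Set ℤ) (k : ℕ) : Set ℤ :=
  {z : ℤ | ∃ f : Fin k → ℤ, (∀ i, f i ∈ X) ∧ z = ∑ i, f i}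

/-- `Σ_n(X) = ⋃_{k=1}^n k(X)`. -/
def sigmaSum (n : ℕ) (X : Set ℤ) : Set ℤ :=
  ⋃ k ∈ Finset.Icc 1 n, kFold X k

/-- `±A = {x ∈ ℤ : |x| ∈ A}`. -/
def pmSet (A : Set ℤ) : Set ℤ := {x : ℤ | |x| ∈ A}

/-- The lower asymptotic density of a set of naturals:
`liminf_{n → ∞} |A ∩ {1,…,n}| / n`. -/
noncomputable def lowerDensity (A : Set ℕ) : ℝ :=
  Filter.liminf (fun n : ℕ => (Set.ncard (A ∩ Set.Icc 1 n) : ℝ) / n) Filter.atTop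

/-- The set of naturals whose image in `ℤ` lies in `S`. -/
def intSetToNat (S : Set ℤ) : Set ℕ := {n : ℕ | (n : ℤ) ∈ S}

/-- `A ⊆ ℤ` is sufficiently sparse if `δ̲(Σ_n(±A) ∩ ℕ) = 0` for all `n ≥ 1`. -/
def SuffSparse (A : Set ℤ) : Prop :=
  ∀ n : ℕ, 1 ≤ n → lowerDensity (intSetToNat (sigmaSum n (pmSet A))) = 0

/-- A set `S` of (positive) reals is geometric if `{s/t : s, t ∈ S, t ≤ s}` is a closed
and discrete subset of `ℝ`. -/
def IsGeometric (S : Set ℝ) : Prop :=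
  IsClosed {x : ℝ | ∃ s ∈ S, ∃ t ∈ S, t ≤ s ∧ x = s / t} ∧
    DiscreteTopology {x : ℝ | ∃ s ∈ S, ∃ t ∈ S, t ≤ s ∧ x = s / t}

/-- `A ⊆ ℤ` is geometrically sparse if there is `f : A → ℝ⁺` with `f(A)` geometric and
`sup_{a ∈ A} |a − f(a)| < ∞`. -/
def GeomSparse (A : Set ℤ) : Prop :=
  ∃ f : ℤ → ℝ, (∀ a ∈ A, 0 < f a) ∧ IsGeometric (f '' A) ∧
    ∃ C : ℝ, ∀ a ∈ A, |(a : ℝ) - f a| ≤ C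

namespace SS0


lemma mem_kFold_add {X : Set ℤ} {x y : ℤ} {k l : ℕ}
    (hx : x ∈ kFold X k) (hy : y ∈ kFold X l) : x + y ∈ kFold X (k + l) := by
  obtain ⟨f, hf, rfl⟩ := hx
  obtain ⟨g, hg, rfl⟩ := hy
  refine ⟨Fin.append f g, fun i => ?_, by rw [Fin.sum_univ_add]; simp⟩
  refine Fin.addCases (fun i => ?_) (fun i => ?_) i
  · simpa using hf i
  · simpa using hg i

lemma mem_sigmaSum {X : Set ℤ} {x : ℤ} {n : ℕ} :
    x ∈ sigmaSum n X ↔ ∃ k, 1 ≤ k ∧ k ≤ n ∧ x ∈ kFold X k := by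
  simp [sigmaSum, Finset.mem_Icc, and_assoc]

lemma sigmaSum_mono {X : Set ℤ} {n m : ℕ} (h : n ≤ m) : sigmaSum n X ⊆ sigmaSum m X := by
  intro x hx
  rw [mem_sigmaSum] at hx ⊢
  obtain ⟨k, h1, h2, h3⟩ := hx
  exact ⟨k, h1, h2.trans h, h3⟩

lemma sigmaSum_add {X : Set ℤ} {x y : ℤ} {n m : ℕ}
    (hx : x ∈ sigmaSum n X) (hy : y ∈ sigmaSum m X) : x + y ∈ sigmaSum (n + m) X := by
  rw [mem_sigmaSum] at hx hy ⊢
  obtain ⟨k, hk1, hk2, hk3⟩ := hx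
  obtain ⟨l, hl1, hl2, hl3⟩ := hy
  exact ⟨k + l, le_add_right hk1, Nat.add_le_add hk2 hl2, mem_kFold_add hk3 hl3⟩

lemma sigmaSum_neg {X : Set ℤ} (hX : ∀ x ∈ X, -x ∈ X) {x : ℤ} {n : ℕ}
    (hx : x ∈ sigmaSum n X) : -x ∈ sigmaSum n X := by
  rw [mem_sigmaSum] at hx ⊢
  obtain ⟨k, hk1, hk2, f, hf, rfl⟩ := hx
  exact ⟨k, hk1, hk2, fun i => -f i, fun i => hX _ (hf i), by rw [← Finset.sum_neg_distrib]⟩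

lemma pmSet_neg (A : Set ℤ) : ∀ x ∈ pmSet A, -x ∈ pmSet A := by
  intro x hx
  simpa [pmSet, abs_neg] using hx

lemma list_sum_mem {X : Set ℤ} {C : ℕ} :
    ∀ l : List ℤ, l ≠ [] → (∀ z ∈ l, z ∈ sigmaSum C X) → l.sum ∈ sigmaSum (l.length * C) X := by
  intro l
  induction l with
  | nil => intro h; exact absurd rfl h
  | cons a l ih =>
    intro _ hz
    rcases eq_or_ne l [] with rfl | hl
    · simpa using hz a (by simp)
    · have h1 : a ∈ sigmaSum C X := hz a (by simp)
      have h2 := ih hl (fun z hzl => hz z (by simp [hzl]))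
      have := sigmaSum_add h1 h2
      simpa [List.length_cons, add_mul, one_mul, add_comm] using this


open Finset

open scoped Classical in
noncomputable def cnt (X : Set ℕ) (k : ℕ) : ℕ := ((Finset.Ioc 0 k).filter (· ∈ X)).card

open scoped Classical in
noncomputable def wcnt (X : Set ℕ) (b k : ℕ) : ℕ := ((Finset.Ioc b (b + k)).filter (· ∈ X)).card

lemma cnt_le (X : Set ℕ) (k : ℕ) : cnt X k ≤ k := by
  classical
  calc cnt X k ≤ (Finset.Ioc 0 k).card := Finset.card_filter_le _ _
  _ = k := by simp

lemma cnt_mono_set {X Y : Set ℕ} (h : X ⊆ Y) (k : ℕ) : cnt X k ≤ cnt Y k := by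
  classical
  refine Finset.card_le_card ?_
  intro a ha
  simp only [Finset.mem_filter] at ha ⊢
  exact ⟨ha.1, h ha.2⟩

lemma ncard_eq_cnt (X : Set ℕ) (k : ℕ) : (X ∩ Set.Icc 1 k).ncard = cnt X k := by
  classical
  rw [cnt, ← Set.ncard_coe_finset]
  congr 1
  ext a
  simp only [Finset.coe_filter, Finset.mem_Ioc, Set.mem_setOf_eq, Set.mem_inter_iff,
    Set.mem_Icc]
  constructor
  · rintro ⟨hX, h1, h2⟩
    exact ⟨⟨h1, h2⟩, hX⟩
  · rintro ⟨⟨h1, h2⟩, hX⟩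
    exact ⟨hX, h1, h2⟩

lemma lowerDensity_eq (X : Set ℕ) :
    lowerDensity X = Filter.liminf (fun k : ℕ => (cnt X k : ℝ) / k) Filter.atTop := by
  unfold lowerDensity
  congr 1
  ext k
  rw [ncard_eq_cnt]

lemma cnt_bdd_above (X : Set ℕ) :
    Filter.IsBoundedUnder (· ≤ ·) Filter.atTop (fun k : ℕ => (cnt X k : ℝ) / k) := by
  refine Filter.isBoundedUnder_of ⟨1, fun k => ?_⟩
  rcases Nat.eq_zero_or_pos k with rfl | hk
  · simp
  · rw [div_le_one (by exact_mod_cast hk : (0:ℝ) < k)]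
    exact_mod_cast cnt_le X k

lemma cnt_bdd_below (X : Set ℕ) :
    Filter.IsBoundedUnder (· ≥ ·) Filter.atTop (fun k : ℕ => (cnt X k : ℝ) / k) := by
  refine Filter.isBoundedUnder_of ⟨0, fun k => ?_⟩
  positivity

lemma lowerDensity_nonneg (X : Set ℕ) : 0 ≤ lowerDensity X := by
  rw [lowerDensity_eq]
  refine Filter.le_liminf_of_le ((cnt_bdd_above X).isCoboundedUnder_ge) ?_
  exact Filter.Eventually.of_forall fun k => by positivity

/-- From nonzero lower density, get a uniform eventual counting bound. -/
lemma exists_eventual_bound {X : Set ℕ} (h : lowerDensity X ≠ 0) :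
    ∃ c : ℝ, 0 < c ∧ ∀ᶠ k in Filter.atTop, c * k ≤ (cnt X k : ℝ) := by
  have h0 : 0 < lowerDensity X := lt_of_le_of_ne (lowerDensity_nonneg X) (Ne.symm h)
  set L := lowerDensity X with hL
  have h0' : L / 2 < Filter.liminf (fun k : ℕ => (cnt X k : ℝ) / k) Filter.atTop := by
    rw [← lowerDensity_eq]
    linarith
  have hev := Filter.eventually_lt_of_lt_liminf h0' (cnt_bdd_below X)
  refine ⟨L / 2, by linarith, ?_⟩
  filter_upwards [hev, Filter.eventually_ge_atTop 1] with k hk hk1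
  have hkpos : (0:ℝ) < k := by exact_mod_cast hk1
  rw [lt_div_iff₀ hkpos] at hk
  linarith

/-- If eventually `c * k ≤ cnt X k` with `c > 0`, then `lowerDensity X ≠ 0`. -/
lemma lowerDensity_ne_zero {X : Set ℕ} {c : ℝ} (hc : 0 < c)
    (h : ∀ᶠ k in Filter.atTop, c * k ≤ (cnt X k : ℝ)) : lowerDensity X ≠ 0 := by
  have hle : c ≤ lowerDensity X := by
    rw [lowerDensity_eq]
    refine Filter.le_liminf_of_le ((cnt_bdd_above X).isCoboundedUnder_ge) ?_
    filter_upwards [h, Filter.eventually_ge_atTop 1] with k hk hk1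
    have hkpos : (0:ℝ) < k := by exact_mod_cast hk1
    rw [le_div_iff₀ hkpos]
    linarith
  intro h0
  rw [h0] at hle
  linarith

lemma cnt_add_wcnt (X : Set ℕ) (b k : ℕ) : cnt X (b + k) = cnt X b + wcnt X b k := by
  classical
  rw [cnt, cnt, wcnt, ← Finset.card_union_of_disjoint, ← Finset.filter_union,
    Finset.Ioc_union_Ioc_eq_Ioc (Nat.zero_le b) (Nat.le_add_right b k)]
  refine Finset.disjoint_left.mpr ?_
  intro a ha hb
  simp only [Finset.mem_filter, Finset.mem_Ioc] at ha hb
  omega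

/-- Density point lemma. -/
lemma exists_density_point {X : Set ℕ} {c α : ℝ} (hα : α < c) (hα0 : 0 < α)
    (h : ∀ᶠ k in Filter.atTop, c * k ≤ (cnt X k : ℝ)) :
    ∃ b : ℕ, ∀ k : ℕ, 1 ≤ k → α * k ≤ (wcnt X b k : ℝ) := by
  by_contra hcon
  push_neg at hcon
  choose K hK1 hK2 using hcon
  set f : ℕ → ℕ := fun b => b + K b with hf
  have hps : ∀ i, f^[i+1] 0 = f^[i] 0 + K (f^[i] 0) := by
    intro i
    rw [Function.iterate_succ_apply']
  have hpi : ∀ i, i ≤ f^[i] 0 := by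
    intro i
    induction i with
    | zero => simp
    | succ n ih =>
      rw [hps n]
      have := hK1 (f^[n] 0)
      omega
  have hcnt : ∀ i, (cnt X (f^[i] 0) : ℝ) ≤ α * (f^[i] 0) := by
    intro i
    induction i with
    | zero => simp [cnt]
    | succ n ih =>
      rw [hps n, cnt_add_wcnt]
      push_cast
      have := le_of_lt (hK2 (f^[n] 0))
      push_cast at this ⊢
      linarith
  rw [Filter.eventually_atTop] at h
  obtain ⟨N, hN⟩ := h
  have h1 := hN (f^[N+1] 0) (le_trans (Nat.le_succ N) (hpi (N+1)))
  have h2 := hcnt (N + 1)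
  have hppos : (0:ℝ) < f^[N+1] 0 := by
    have := hpi (N+1)
    exact_mod_cast Nat.lt_of_lt_of_le (Nat.succ_pos N) this
  nlinarith


open scoped Classical in
lemma cnt_compl (X : Set ℕ) (k : ℕ) :
    ((Finset.Ioc 0 k).filter (fun m => m ∉ X)).card = k - cnt X k := by
  have h := Finset.card_filter_add_card_filter_not
      (s := Finset.Ioc 0 k) (p := fun m => m ∈ X)
  simp only [Nat.card_Ioc, Nat.sub_zero] at h
  rw [cnt]
  omega

lemma schnirelmann_step {A B : Set ℕ} (hA : 0 ∈ A) (hB : 0 ∈ B) {β : ℝ}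
    (hβ : ∀ k : ℕ, 1 ≤ k → β * k ≤ (cnt B k : ℝ)) :
    ∀ k : ℕ, ((k:ℝ) - cnt (A + B) k) ≤ (1 - β) * ((k:ℝ) - cnt A k) := by
  classical
  have hβ1 : β ≤ 1 := by
    have h1 := hβ 1 le_rfl
    have h2 : (cnt B 1 : ℝ) ≤ 1 := by exact_mod_cast cnt_le B 1
    push_cast at h1
    linarith
  intro k
  -- the "predecessor in A" function
  set p : ℕ → ℕ := fun m => Nat.findGreatest (fun a => a ∈ A ∧ a < m) m with hp
  have hp_spec : ∀ m, 1 ≤ m → p m ∈ A ∧ p m < m := by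
    intro m hm
    exact Nat.findGreatest_spec (P := fun a => a ∈ A ∧ a < m) (Nat.zero_le m) ⟨hA, hm⟩
  have hp_max : ∀ m a, p m < a → a < m → a ∉ A := by
    intro m a h1 h2 hmem
    exact Nat.findGreatest_is_greatest (P := fun a => a ∈ A ∧ a < m) h1 (le_of_lt h2) ⟨hmem, h2⟩
  have hp_eq : ∀ m m', 1 ≤ m' → m' ≤ m → p m < m' → p m' = p m := by
    intro m m' hm'1 hm'm hlt
    have hm1 : 1 ≤ m := le_trans hm'1 hm'm
    obtain ⟨hpA, hpm⟩ := hp_spec m hm1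
    have hle : p m ≤ p m' :=
      Nat.le_findGreatest (le_of_lt hlt) ⟨hpA, hlt⟩
    rcases lt_or_eq_of_le hle with hlt2 | heq
    · exfalso
      have hspec' : p m' ∈ A ∧ p m' < m' :=
        Nat.findGreatest_spec (P := fun a => a ∈ A ∧ a < m') (Nat.zero_le m') ⟨hA, hm'1⟩
      exact hp_max m (p m') hlt2 (lt_of_lt_of_le hspec'.2 hm'm) hspec'.1
    · exact heq.symm
  set bad := (Finset.Ioc 0 k).filter (fun m => m ∉ A + B) with hbad
  set nA := (Finset.Ioc 0 k).filter (fun m => m ∉ A) with hnA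
  set t := (Finset.range k).filter (fun a => a ∈ A) with ht
  have hmemA_AB : ∀ m ∈ A, m ∈ A + B := fun m hm => ⟨m, hm, 0, hB, add_zero m⟩
  have hbad_nA : bad ⊆ nA := by
    intro m hm
    simp only [hbad, hnA, Finset.mem_filter] at hm ⊢
    exact ⟨hm.1, fun hmA => hm.2 (hmemA_AB m hmA)⟩
  have hfib : ∀ s : Finset ℕ, s ⊆ nA → ∀ m ∈ s, p m ∈ t := by
    intro s hs m hm
    have hm' := hs hm
    simp only [hnA, Finset.mem_filter, Finset.mem_Ioc] at hm'
    obtain ⟨⟨hm0, hmk⟩, _⟩ := hm'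
    obtain ⟨h1, h2⟩ := hp_spec m hm0
    simp only [ht, Finset.mem_filter, Finset.mem_range]
    exact ⟨lt_of_lt_of_le h2 hmk, h1⟩
  -- fiberwise decomposition
  have hbad_card : bad.card = ∑ a ∈ t, (bad.filter (fun m => p m = a)).card :=
    Finset.card_eq_sum_card_fiberwise (hfib bad hbad_nA)
  have hnA_card : nA.card = ∑ a ∈ t, (nA.filter (fun m => p m = a)).card :=
    Finset.card_eq_sum_card_fiberwise (hfib nA (le_refl nA))
  -- per-fiber bound
  have hper : ∀ a ∈ t, ((bad.filter (fun m => p m = a)).card : ℝ) ≤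
      (1 - β) * ((nA.filter (fun m => p m = a)).card : ℝ) := by
    intro a hat
    have haA : a ∈ A := by
      simp only [ht, Finset.mem_filter] at hat
      exact hat.2
    set F := nA.filter (fun m => p m = a) with hF
    set G := bad.filter (fun m => p m = a) with hG
    have hGF : G ⊆ F := by
      intro m hm
      rw [hG, Finset.mem_filter] at hm
      rw [hF, Finset.mem_filter]
      exact ⟨hbad_nA hm.1, hm.2⟩
    have hFmem : ∀ m ∈ F, 0 < m ∧ m ≤ k ∧ m ∉ A ∧ p m = a ∧ a < m := by
      intro m hm
      simp only [hF, hnA, Finset.mem_filter, Finset.mem_Ioc] at hm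
      obtain ⟨⟨⟨h0, hk'⟩, hnAm⟩, hpm⟩ := hm
      refine ⟨h0, hk', hnAm, hpm, ?_⟩
      have := (hp_spec m h0).2
      omega
    -- interval property
    have hint : ∀ m ∈ F, ∀ m', a < m' → m' ≤ m → m' ∈ F := by
      intro m hm m' ham' hm'm
      obtain ⟨h0, hk', hnAm, hpm, ham⟩ := hFmem m hm
      have hm'0 : 0 < m' := Nat.lt_of_le_of_lt (Nat.zero_le a) ham'
      have hm'A : m' ∉ A := by
        rcases lt_or_eq_of_le hm'm with hlt | rfl
        · exact hp_max m m' (by omega) (by omega)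
        · exact hnAm
      have hpm' : p m' = a := by
        rw [hp_eq m m' hm'0 hm'm (by omega)]
        exact hpm
      simp only [hF, hnA, Finset.mem_filter, Finset.mem_Ioc]
      exact ⟨⟨⟨hm'0, le_trans hm'm hk'⟩, hm'A⟩, hpm'⟩
    -- F is the interval Ioc a (a + F.card)
    have hFIoc : F = Finset.Ioc a (a + F.card) := by
      rcases Finset.eq_empty_or_nonempty F with hFe | hFne
      · simp [hFe]
      · set M := F.max' hFne with hM
        have hMF : M ∈ F := F.max'_mem hFne
        have hsub1 : F ⊆ Finset.Ioc a M := by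
          intro m hm
          simp only [Finset.mem_Ioc]
          exact ⟨(hFmem m hm).2.2.2.2, F.le_max' m hm⟩
        have hsub2 : Finset.Ioc a M ⊆ F := by
          intro m' hm'
          simp only [Finset.mem_Ioc] at hm'
          exact hint M hMF m' hm'.1 hm'.2
        have hFeq : F = Finset.Ioc a M := subset_antisymm hsub1 hsub2
        have haM : a ≤ M := le_of_lt (hFmem M hMF).2.2.2.2
        rw [hFeq]
        congr 1
        rw [Nat.card_Ioc]
        omega
    -- injection into non-elements of B
    set g := F.card with hg
    have hinj : (G.card : ℝ) ≤ (((Finset.Ioc 0 g).filter (fun x => x ∉ B)).card : ℝ) := by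
      have : G.card ≤ ((Finset.Ioc 0 g).filter (fun x => x ∉ B)).card := by
        refine Finset.card_le_card_of_injOn (fun m => m - a) ?_ ?_
        · intro m hm
          have hmF := hGF hm
          have hm' : a < m ∧ m ≤ a + g := by
            have h2 : m ∈ Finset.Ioc a (a + g) := by rw [← hFIoc]; exact hmF
            simpa using h2
          simp only [Finset.mem_coe, Finset.mem_filter, Finset.mem_Ioc]
          constructor
          · omega
          · intro hmaB
            rw [Finset.mem_coe, hG, Finset.mem_filter, hbad, Finset.mem_filter] at hm
            exact hm.1.2 ⟨a, haA, m - a, hmaB, Nat.add_sub_cancel' (le_of_lt hm'.1)⟩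
        · intro m1 h1 m2 h2 he
          have hm1 : a < m1 ∧ m1 ≤ a + g := by
            have h2 : m1 ∈ Finset.Ioc a (a + g) := by rw [← hFIoc]; exact hGF h1
            simpa using h2
          have hm2 : a < m2 ∧ m2 ≤ a + g := by
            have h2 : m2 ∈ Finset.Ioc a (a + g) := by rw [← hFIoc]; exact hGF h2
            simpa using h2
          have he' : m1 - a = m2 - a := he
          omega
      exact_mod_cast this
    have hcompl : (((Finset.Ioc 0 g).filter (fun x => x ∉ B)).card : ℝ) ≤ (1 - β) * g := by
      rw [cnt_compl]
      by_cases hg0 : g = 0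
      · rw [hg0]
        simp [cnt]
      · have hgpos : 1 ≤ g := Nat.one_le_iff_ne_zero.mpr hg0
        have hb := hβ g hgpos
        have hle := cnt_le B g
        push_cast [Nat.cast_sub hle]
        linarith
    calc (G.card : ℝ) ≤ (1 - β) * g := le_trans hinj hcompl
    _ = (1 - β) * (F.card : ℝ) := by rw [hg]
  -- assemble
  have h1 : ((k:ℝ) - cnt (A + B) k) = (bad.card : ℝ) := by
    rw [hbad, cnt_compl]
    have := cnt_le (A + B) k
    push_cast [Nat.cast_sub this]
    ring
  have h2 : ((k:ℝ) - cnt A k) = (nA.card : ℝ) := by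
    rw [hnA, cnt_compl]
    have := cnt_le A k
    push_cast [Nat.cast_sub this]
    ring
  rw [h1, h2, hbad_card, hnA_card]
  push_cast
  rw [Finset.mul_sum]
  exact Finset.sum_le_sum hper

def foldSum (T : Set ℕ) : ℕ → Set ℕ
  | 0 => {0}
  | j+1 => foldSum T j + T

lemma zero_mem_foldSum {T : Set ℕ} (h0 : 0 ∈ T) : ∀ j, 0 ∈ foldSum T j := by
  intro j
  induction j with
  | zero => simp [foldSum]
  | succ n ih => exact ⟨0, ih, 0, h0, rfl⟩

lemma cnt_eq_zero {X : Set ℕ} (h : ∀ m, 0 < m → m ∉ X) (k : ℕ) : cnt X k = 0 := by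
  classical
  rw [cnt, Finset.card_eq_zero, Finset.eq_empty_iff_forall_notMem]
  intro m hm
  rw [Finset.mem_filter, Finset.mem_Ioc] at hm
  exact h m hm.1.1 hm.2

lemma cnt_singleton_zero (k : ℕ) : cnt {0} k = 0 :=
  cnt_eq_zero (fun m hm h0 => by
    have : m = 0 := Set.mem_singleton_iff.mp h0
    omega) k

lemma foldSum_comp {T : Set ℕ} (h0 : 0 ∈ T) {α : ℝ}
    (hd : ∀ k : ℕ, 1 ≤ k → α * k ≤ (cnt T k : ℝ)) :
    ∀ h k : ℕ, ((k:ℝ) - cnt (foldSum T h) k) ≤ (1 - α) ^ h * k := by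
  have hα1 : α ≤ 1 := by
    have h1 := hd 1 le_rfl
    have h2 : (cnt T 1 : ℝ) ≤ 1 := by exact_mod_cast cnt_le T 1
    push_cast at h1
    linarith
  intro h
  induction h with
  | zero =>
    intro k
    simp only [foldSum, pow_zero, one_mul, cnt_singleton_zero]
    have : (0:ℝ) ≤ k := by positivity
    simp
  | succ n ih =>
    intro k
    have step := schnirelmann_step (zero_mem_foldSum h0 n) h0 hd k
    have hmono : (1 - α) * ((k:ℝ) - cnt (foldSum T n) k) ≤ (1 - α) * ((1 - α) ^ n * k) :=
      mul_le_mul_of_nonneg_left (ih k) (by linarith)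
    calc ((k:ℝ) - cnt (foldSum T (n+1)) k) ≤ (1 - α) * ((k:ℝ) - cnt (foldSum T n) k) := step
    _ ≤ (1 - α) * ((1 - α) ^ n * k) := hmono
    _ = (1 - α) ^ (n+1) * k := by ring

lemma foldSum_rep {T' : Set ℕ} : ∀ {h u : ℕ}, u ∈ foldSum (insert 0 T') h →
    ∃ l : List ℕ, (∀ x ∈ l, x ∈ T') ∧ l.length ≤ h ∧ l.sum = u := by
  intro h
  induction h with
  | zero =>
    intro u hu
    refine ⟨[], by simp, by simp, ?_⟩
    simpa [foldSum] using hu.symm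
  | succ n ih =>
    intro u hu
    obtain ⟨v, hv, z, hz, rfl⟩ := hu
    rcases hz with rfl | hzT
    · obtain ⟨l, h1, h2, h3⟩ := ih hv
      exact ⟨l, h1, le_trans h2 (Nat.le_succ n), by simpa using h3⟩
    · obtain ⟨l, h1, h2, h3⟩ := ih hv
      refine ⟨z :: l, ?_, by simpa using h2, by simp [h3, add_comm]⟩
      intro x hx
      rcases List.mem_cons.mp hx with rfl | hxl
      · exact hzT
      · exact h1 x hxl

lemma overlap {P : Set ℕ} {ρ : ℝ} (hρ : 1/2 < ρ)
    (hcnt : ∀ k : ℕ, ρ * k ≤ (cnt P k : ℝ)) {t : ℕ} (ht : 1 ≤ t) :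
    ∃ u v : ℕ, u ∈ P ∧ v ∈ P ∧ 1 ≤ v ∧ u = v + t := by
  classical
  have h2ρ : 0 < 2 * ρ - 1 := by linarith
  set K := Nat.ceil ((ρ * t + 1) / (2 * ρ - 1)) with hK
  set k := t + 1 + K with hk
  have hkK : (K:ℝ) ≤ k := by
    have : K ≤ k := by omega
    exact_mod_cast this
  have htk : t + 1 ≤ k := by omega
  have hkey : ρ * t + 1 ≤ (2 * ρ - 1) * k := by
    have h1 : (ρ * t + 1) / (2 * ρ - 1) ≤ (K : ℝ) := Nat.le_ceil _
    have h2 : (ρ * t + 1) ≤ (2 * ρ - 1) * K := by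
      rw [div_le_iff₀ h2ρ] at h1
      linarith
    nlinarith
  set X := (Finset.Ioc 0 k).filter (· ∈ P) with hX
  set Y := ((Finset.Ioc 0 (k - t)).filter (· ∈ P)).image (· + t) with hY
  have hXcard : ρ * k ≤ (X.card : ℝ) := hcnt k
  have hYcard : ρ * ((k:ℝ) - t) ≤ (Y.card : ℝ) := by
    have hinj : Y.card = cnt P (k - t) := by
      rw [hY, Finset.card_image_of_injective _ (add_left_injective t), cnt]
    rw [hinj]
    have := hcnt (k - t)
    have hcast : ((k - t : ℕ) : ℝ) = (k:ℝ) - t := by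
      have : t ≤ k := by omega
      push_cast [this]
      ring
    rw [← hcast]
    exact this
  have hsub : X ∪ Y ⊆ Finset.Ioc 0 k := by
    intro w hw
    rcases Finset.mem_union.mp hw with hw | hw
    · exact (Finset.mem_filter.mp hw).1
    · rw [hY] at hw
      obtain ⟨v, hv, rfl⟩ := Finset.mem_image.mp hw
      have := (Finset.mem_filter.mp hv).1
      simp only [Finset.mem_Ioc] at this ⊢
      omega
  have hnd : ¬ Disjoint X Y := by
    intro hdisj
    have hcard := Finset.card_le_card hsub
    rw [Finset.card_union_of_disjoint hdisj] at hcard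
    simp only [Nat.card_Ioc, Nat.sub_zero] at hcard
    have : (X.card : ℝ) + Y.card ≤ k := by exact_mod_cast hcard
    have htR : (1:ℝ) ≤ t := by exact_mod_cast ht
    nlinarith
  obtain ⟨w, hwX, hwY⟩ := Finset.not_disjoint_iff.mp hnd
  rw [hY] at hwY
  obtain ⟨v, hv, rfl⟩ := Finset.mem_image.mp hwY
  rw [Finset.mem_filter] at hv hwX
  exact ⟨v + t, v, hwX.2, hv.2, (Finset.mem_Ioc.mp hv.1).1, rfl⟩

lemma cnt_insert_zero (T : Set ℕ) (k : ℕ) : cnt (insert 0 T) k = cnt T k := by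
  classical
  rw [cnt, cnt]
  congr 1
  ext m
  simp only [Finset.mem_filter, Finset.mem_Ioc, Set.mem_insert_iff]
  constructor
  · rintro ⟨⟨h0, hk⟩, h⟩
    rcases h with rfl | h
    · omega
    · exact ⟨⟨h0, hk⟩, h⟩
  · rintro ⟨⟨h0, hk⟩, h⟩
    exact ⟨⟨h0, hk⟩, Or.inr h⟩

lemma cnt_shift (S : Set ℕ) (b k : ℕ) : cnt {x : ℕ | 1 ≤ x ∧ b + x ∈ S} k = wcnt S b k := by
  classical
  rw [cnt, wcnt]
  refine Finset.card_bij (fun x _ => b + x) ?_ ?_ ?_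
  · intro x hx
    simp only [Finset.mem_filter, Finset.mem_Ioc, Set.mem_setOf_eq] at hx
    simp only [Finset.mem_filter, Finset.mem_Ioc]
    obtain ⟨⟨h0, hk⟩, _, hS⟩ := hx
    exact ⟨⟨by omega, by omega⟩, hS⟩
  · intro x hx y hy he
    have he' : b + x = b + y := he
    omega
  · intro m hm
    simp only [Finset.mem_filter, Finset.mem_Ioc] at hm
    obtain ⟨⟨h1, h2⟩, h3⟩ := hm
    refine ⟨m - b, ?_, ?_⟩
    · simp only [Finset.mem_filter, Finset.mem_Ioc, Set.mem_setOf_eq]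
      refine ⟨⟨by omega, by omega⟩, by omega, ?_⟩
      rwa [show b + (m - b) = m by omega]
    · show b + (m - b) = m
      omega

lemma wcnt_pos {S : Set ℕ} {b k : ℕ} (h : 0 < wcnt S b k) : ∃ m, b < m ∧ m ≤ b + k ∧ m ∈ S := by
  classical
  rw [wcnt, Finset.card_pos] at h
  obtain ⟨m, hm⟩ := h
  rw [Finset.mem_filter, Finset.mem_Ioc] at hm
  exact ⟨m, hm.1.1, hm.1.2, hm.2⟩

lemma cnt_two {X : Set ℕ} {k : ℕ} (h : 2 ≤ cnt X k) :
    ∃ x y : ℕ, (0 < x ∧ x ≤ k ∧ x ∈ X) ∧ (0 < y ∧ y ≤ k ∧ y ∈ X) ∧ x ≠ y := by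
  classical
  rw [cnt] at h
  obtain ⟨x, hx, y, hy, hxy⟩ := Finset.one_lt_card.mp (lt_of_lt_of_le one_lt_two h)
  rw [Finset.mem_filter, Finset.mem_Ioc] at hx hy
  exact ⟨x, y, ⟨hx.1.1, hx.1.2, hx.2⟩, ⟨hy.1.1, hy.1.2, hy.2⟩, hxy⟩

lemma wcnt_div_le {T' S2 : Set ℕ} {d : ℕ} (hd : 1 ≤ d)
    (hmap : ∀ x, 1 < x → x ∈ T' → ∃ z : ℕ, 1 ≤ z ∧ x = 1 + d * z ∧ z ∈ S2) :
    ∀ k : ℕ, wcnt T' 1 (d * k) ≤ cnt S2 k := by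
  classical
  intro k
  rw [wcnt, cnt]
  refine Finset.card_le_card_of_injOn (fun x => (x - 1) / d) ?_ ?_
  · intro x hx
    rw [Finset.mem_coe, Finset.mem_filter, Finset.mem_Ioc] at hx
    obtain ⟨⟨hx1, hx2⟩, hxT⟩ := hx
    obtain ⟨z, hz1, hz2, hz3⟩ := hmap x hx1 hxT
    have hdiv : (x - 1) / d = z := by
      rw [hz2]
      simp only [Nat.add_sub_cancel_left]
      exact Nat.mul_div_cancel_left z (by omega)
    rw [Finset.mem_coe, Finset.mem_filter, Finset.mem_Ioc]
    show (0 < (x-1)/d ∧ (x-1)/d ≤ k) ∧ (x-1)/d ∈ S2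
    rw [hdiv]
    refine ⟨⟨by omega, ?_⟩, hz3⟩
    -- z ≤ k from 1 + d*z ≤ 1 + d*k
    have : d * z ≤ d * k := by omega
    exact Nat.le_of_mul_le_mul_left this (by omega)
  · intro x hx y hy he
    rw [Finset.coe_filter] at hx hy
    simp only [Set.mem_setOf_eq, Finset.mem_Ioc] at hx hy
    obtain ⟨⟨hx1, hx2⟩, hxT⟩ := hx
    obtain ⟨⟨hy1, hy2⟩, hyT⟩ := hy
    obtain ⟨zx, hzx1, hzx2, _⟩ := hmap x hx1 hxT
    obtain ⟨zy, hzy1, hzy2, _⟩ := hmap y hy1 hyT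
    have hdx : (x - 1) / d = zx := by
      rw [hzx2]
      simp only [Nat.add_sub_cancel_left]
      exact Nat.mul_div_cancel_left zx (by omega)
    have hdy : (y - 1) / d = zy := by
      rw [hzy2]
      simp only [Nat.add_sub_cancel_left]
      exact Nat.mul_div_cancel_left zy (by omega)
    have he' : (x - 1) / d = (y - 1) / d := he
    rw [hdx, hdy] at he'
    rw [hzx2, hzy2, he']



lemma sigmaSum_sub {X : Set ℤ} (hsym : ∀ x ∈ X, -x ∈ X) {x y : ℤ} {C : ℕ}
    (hx : x ∈ sigmaSum C X) (hy : y ∈ sigmaSum C X) : x - y ∈ sigmaSum (2 * C) X := by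
  have := sigmaSum_add hx (sigmaSum_neg hsym hy)
  rw [two_mul]
  simpa [sub_eq_add_neg] using this

lemma nat_mul_mem {X : Set ℤ} {z : ℤ} {M : ℕ} (hz : z ∈ sigmaSum M X) :
    ∀ n : ℕ, 1 ≤ n → (n : ℤ) * z ∈ sigmaSum (n * M) X := by
  intro n hn
  induction n with
  | zero => omega
  | succ m ih =>
    rcases Nat.eq_zero_or_pos m with rfl | hm
    · simpa using hz
    · have h1 := ih hm
      have := sigmaSum_add h1 hz
      have he : ((m:ℤ) + 1) * z = (m:ℤ) * z + z := by ring
      rw [show ((m+1 : ℕ) : ℤ) = (m:ℤ) + 1 by push_cast; ring, he]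
      rw [show (m+1) * M = m * M + M by ring]
      exact this

lemma int_mul_mem {X : Set ℤ} (hsym : ∀ x ∈ X, -x ∈ X) {z : ℤ} {M : ℕ}
    (hz : z ∈ sigmaSum M X) : ∀ e : ℤ, e ≠ 0 → e * z ∈ sigmaSum (e.natAbs * M) X := by
  intro e he
  rcases lt_trichotomy e 0 with hneg | rfl | hpos
  · have h1 : ((e.natAbs : ℤ)) * z ∈ sigmaSum (e.natAbs * M) X :=
      nat_mul_mem hz e.natAbs (by omega)
    have h2 := sigmaSum_neg hsym h1
    have he' : e * z = -(((e.natAbs : ℤ)) * z) := by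
      have : (e.natAbs : ℤ) = -e := by omega
      rw [this]; ring
    rw [he']
    exact h2
  · exact absurd rfl he
  · have he' : (e.natAbs : ℤ) = e := by omega
    rw [← he']
    exact nat_mul_mem hz e.natAbs (by omega)

lemma list_affine (D bz : ℤ) : ∀ l : List ℕ,
    (l.map (fun x : ℕ => D * (bz + (x:ℤ)))).sum = (l.length : ℤ) * (D * bz) + D * (l.sum : ℤ) := by
  intro l
  induction l with
  | nil => simp
  | cons a l ih =>
    simp only [List.map_cons, List.sum_cons, ih, List.length_cons, List.sum_cons]
    push_cast
    ring

/-- The main recursive lemma. -/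
lemma rec_lemma {X : Set ℤ} (hsym : ∀ x ∈ X, -x ∈ X) :
    ∀ ℓ : ℕ, ∀ D : ℤ, 1 ≤ D → ∀ C : ℕ, 1 ≤ C → ∀ c : ℝ,
      1 < 2 ^ ℓ * c →
      (∀ᶠ k in Filter.atTop, c * k ≤ (cnt {j : ℕ | D * (j:ℤ) ∈ sigmaSum C X} k : ℝ)) →
      ∃ m : ℤ, 1 ≤ m ∧ ∃ M : ℕ, 1 ≤ M ∧ ∀ y : ℤ, m * y ∈ sigmaSum M X := by
  intro ℓ
  induction ℓ with
  | zero =>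
    intro D hD C hC c hc hev
    exfalso
    obtain ⟨k, hk, hk1⟩ := (hev.and (Filter.eventually_ge_atTop 1)).exists
    have h1 : (cnt {j : ℕ | D * (j:ℤ) ∈ sigmaSum C X} k : ℝ) ≤ k := by
      exact_mod_cast cnt_le _ k
    have hkR : (1:ℝ) ≤ k := by exact_mod_cast hk1
    simp only [pow_zero, one_mul] at hc
    nlinarith
  | succ ℓ ih =>
    intro D hD C hC c hc hev
    set S := {j : ℕ | D * (j:ℤ) ∈ sigmaSum C X} with hS
    set ε : ℝ := 1 / 2 ^ (ℓ + 1) with hε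
    have hεpos : 0 < ε := by positivity
    have hcε : ε < c := by
      rw [hε, div_lt_iff₀ (by positivity)]
      calc (1:ℝ) < 2 ^ (ℓ+1) * c := hc
      _ = c * 2 ^ (ℓ+1) := by ring
    set α : ℝ := (c + ε) / 2 with hα
    have hα0 : 0 < α := by rw [hα]; linarith
    have hαc : α < c := by rw [hα]; linarith
    have hεα : ε < α := by rw [hα]; linarith
    obtain ⟨b, hb⟩ := exists_density_point hαc hα0 hev
    set T' : Set ℕ := {x : ℕ | 1 ≤ x ∧ b + x ∈ S} with hT'
    set T₀ : Set ℕ := insert 0 T' with hT₀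
    -- counting in T₀ equals window counting in S
    have hcntT' : ∀ k : ℕ, 1 ≤ k → α * k ≤ (cnt T' k : ℝ) := by
      intro k hk
      rw [hT', cnt_shift]
      exact hb k hk
    have hcntT : ∀ k : ℕ, 1 ≤ k → α * k ≤ (cnt T₀ k : ℝ) := by
      intro k hk
      rw [hT₀, cnt_insert_zero]
      exact hcntT' k hk
    have hα1 : α ≤ 1 := by
      have h1 := hcntT 1 le_rfl
      have h2 : (cnt T₀ 1 : ℝ) ≤ 1 := by exact_mod_cast cnt_le T₀ 1
      push_cast at h1
      linarith
    have h1T : 1 ∈ T' := by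
      have h1 := hb 1 le_rfl
      have h2 : 0 < wcnt S b 1 := by
        by_contra hcon
        push_neg at hcon
        interval_cases h : wcnt S b 1
        · norm_num at h1; linarith
      obtain ⟨m, hm1, hm2, hm3⟩ := wcnt_pos h2
      have hm : m = b + 1 := by omega
      rw [hT']
      exact ⟨le_rfl, by rwa [← hm]⟩
    -- realization of T' elements inside sigmaSum
    have hreal : ∀ x ∈ T', D * ((b:ℤ) + x) ∈ sigmaSum C X := by
      intro x hx
      have h1 : b + x ∈ S := hx.2
      have := h1
      rw [hS] at this
      simp only [Set.mem_setOf_eq] at this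
      rw [show ((b:ℤ) + x) = ((b + x : ℕ) : ℤ) by push_cast; ring]
      exact this
    have hdiff : ∀ x ∈ T', ∀ y ∈ T', D * ((x:ℤ) - y) ∈ sigmaSum (2 * C) X := by
      intro x hx y hy
      have h := sigmaSum_sub hsym (hreal x hx) (hreal y hy)
      have he : D * ((b:ℤ) + x) - D * ((b:ℤ) + y) = D * ((x:ℤ) - y) := by ring
      rwa [he] at h
    set E : Set ℤ := {z : ℤ | ∃ x ∈ T', z = (x:ℤ) - 1} with hE
    set H := AddSubgroup.closure E with hH
    by_cases h1H : (1:ℤ) ∈ H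
    · -- gcd 1 branch: full coset of D·ℤ
      have key : ∀ z ∈ H, ∃ N : ℕ, 1 ≤ N ∧ D * z ∈ sigmaSum (N * (2 * C)) X := by
        intro z hz
        refine AddSubgroup.closure_induction ?_ ?_ ?_ ?_ hz
        · rintro x ⟨x', hx', rfl⟩
          refine ⟨1, le_rfl, ?_⟩
          rw [one_mul]
          exact hdiff x' hx' 1 h1T
        · refine ⟨1, le_rfl, ?_⟩
          rw [one_mul, mul_zero]
          have h0 := hdiff 1 h1T 1 h1T
          simpa using h0
        · rintro x y hx hy ⟨N1, hN1, hx'⟩ ⟨N2, hN2, hy'⟩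
          refine ⟨N1 + N2, by omega, ?_⟩
          have h3 := sigmaSum_add hx' hy'
          rw [show (N1 + N2) * (2 * C) = N1 * (2 * C) + N2 * (2 * C) by ring, mul_add]
          exact h3
        · rintro x hx ⟨N, hN, hx'⟩
          refine ⟨N, hN, ?_⟩
          rw [mul_neg]
          exact sigmaSum_neg hsym hx'
      obtain ⟨N₁, hN₁, hDmem⟩ := key 1 h1H
      rw [mul_one] at hDmem
      set M₁ := N₁ * (2 * C) with hM₁
      have hM₁pos : 1 ≤ M₁ := Nat.mul_pos (by omega) (by omega)
      -- Schnirelmann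
      obtain ⟨h, hpow⟩ := exists_pow_lt_of_lt_one (show (0:ℝ) < 1/2 by norm_num)
        (show 1 - α < 1 by linarith)
      have hh1 : 1 ≤ h := by
        by_contra hcon
        push_neg at hcon
        interval_cases h
        · simp at hpow; linarith
      set ρ : ℝ := 1 - (1 - α) ^ h with hρdef
      have hρ : 1/2 < ρ := by rw [hρdef]; linarith
      have hcomp := foldSum_comp (Set.mem_insert 0 T') (by rw [← hT₀]; exact hcntT) h
      have hcntP : ∀ k : ℕ, ρ * k ≤ (cnt (foldSum T₀ h) k : ℝ) := by
        intro k
        have h1 := hcomp k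
        have h2 : (cnt (foldSum T₀ h) k : ℝ) ≤ k := by exact_mod_cast cnt_le _ k
        nlinarith [pow_nonneg (show (0:ℝ) ≤ 1 - α by linarith) h, Nat.cast_nonneg (α := ℝ) k]
      -- main claim: D * t ∈ sigmaSum Mbig for all positive naturals t
      set Mbig := 2 * (h * C) + h * M₁ with hMbig
      have hmain : ∀ t : ℕ, 1 ≤ t → D * t ∈ sigmaSum Mbig X := by
        intro t ht
        obtain ⟨u, v, hu, hv, hv1, huv⟩ := overlap hρ hcntP ht
        obtain ⟨lu, hlu1, hlu2, hlu3⟩ := foldSum_rep hu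
        obtain ⟨lv, hlv1, hlv2, hlv3⟩ := foldSum_rep hv
        set Lu := lu ++ List.replicate (h - lu.length) 1 with hLu
        set Lv := lv ++ List.replicate (h - lv.length) 1 with hLv
        have hLu1 : ∀ x ∈ Lu, x ∈ T' := by
          intro x hx
          rcases List.mem_append.mp hx with hx | hx
          · exact hlu1 x hx
          · rw [List.eq_of_mem_replicate hx]; exact h1T
        have hLv1 : ∀ x ∈ Lv, x ∈ T' := by
          intro x hx
          rcases List.mem_append.mp hx with hx | hx
          · exact hlv1 x hx
          · rw [List.eq_of_mem_replicate hx]; exact h1T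
        have hLulen : Lu.length = h := by
          rw [hLu, List.length_append, List.length_replicate]; omega
        have hLvlen : Lv.length = h := by
          rw [hLv, List.length_append, List.length_replicate]; omega
        have hLusum : Lu.sum = u + (h - lu.length) := by
          rw [hLu, List.sum_append, List.sum_replicate, hlu3]; simp
        have hLvsum : Lv.sum = v + (h - lv.length) := by
          rw [hLv, List.sum_append, List.sum_replicate, hlv3]; simp
        -- the two big sums
        have hDU : (Lu.map (fun x : ℕ => D * ((b:ℤ) + x))).sum ∈ sigmaSum (h * C) X := by
          have hne : Lu.map (fun x : ℕ => D * ((b:ℤ) + x)) ≠ [] := by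
            simp only [ne_eq, List.map_eq_nil_iff]
            intro hnil
            rw [← List.length_eq_zero_iff] at hnil
            omega
          have := list_sum_mem _ hne (by
            intro z hz
            rw [List.mem_map] at hz
            obtain ⟨x, hx, rfl⟩ := hz
            exact hreal x (hLu1 x hx))
          rwa [List.length_map, hLulen] at this
        have hDV : (Lv.map (fun x : ℕ => D * ((b:ℤ) + x))).sum ∈ sigmaSum (h * C) X := by
          have hne : Lv.map (fun x : ℕ => D * ((b:ℤ) + x)) ≠ [] := by
            simp only [ne_eq, List.map_eq_nil_iff]
            intro hnil
            rw [← List.length_eq_zero_iff] at hnil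
            omega
          have := list_sum_mem _ hne (by
            intro z hz
            rw [List.mem_map] at hz
            obtain ⟨x, hx, rfl⟩ := hz
            exact hreal x (hLv1 x hx))
          rwa [List.length_map, hLvlen] at this
        set e : ℤ := ((h - lu.length : ℕ) : ℤ) - ((h - lv.length : ℕ) : ℤ) with he
        have hW1 : D * ((t:ℤ) + e) ∈ sigmaSum (2 * (h * C)) X := by
          have hsub := sigmaSum_sub hsym hDU hDV
          have heq : (Lu.map (fun x : ℕ => D * ((b:ℤ) + x))).sum
              - (Lv.map (fun x : ℕ => D * ((b:ℤ) + x))).sum = D * ((t:ℤ) + e) := by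
            rw [list_affine, list_affine, hLulen, hLvlen, hLusum, hLvsum, he, huv]
            push_cast
            ring
          rwa [heq] at hsub
        have henat : e.natAbs ≤ h := by
          rw [he]
          omega
        by_cases he0 : e = 0
        · rw [he0, add_zero] at hW1
          exact sigmaSum_mono (by rw [hMbig]; omega) hW1
        · have hDe : e * D ∈ sigmaSum (e.natAbs * M₁) X := int_mul_mem hsym hDmem e he0
          have hDe' : e * D ∈ sigmaSum (h * M₁) X :=
            sigmaSum_mono (Nat.mul_le_mul_right M₁ henat) hDe
          have := sigmaSum_add hW1 (sigmaSum_neg hsym hDe')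
          have heq : D * ((t:ℤ) + e) + -(e * D) = D * t := by ring
          rwa [heq, ← hMbig] at this
      -- wrap up: m := D
      refine ⟨D, hD, Mbig + 2 * C, le_trans (by omega : 1 ≤ 2*C) (Nat.le_add_left _ _), ?_⟩
      have h0mem : (0:ℤ) ∈ sigmaSum (2 * C) X := by
        have h0 := hdiff 1 h1T 1 h1T
        simpa using h0
      intro y
      rcases lt_trichotomy y 0 with hy | rfl | hy
      · have h1 : D * (-y) ∈ sigmaSum Mbig X := by
          have : (1:ℕ) ≤ (-y).toNat := by omega
          have h2 := hmain (-y).toNat this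
          rwa [show (((-y).toNat : ℕ) : ℤ) = -y by omega] at h2
        have h2 := sigmaSum_neg hsym h1
        rw [show -(D * -y) = D * y by ring] at h2
        exact sigmaSum_mono (by omega) h2
      · rw [mul_zero]
        exact sigmaSum_mono (by omega) h0mem
      · have : (1:ℕ) ≤ y.toNat := by omega
        have h2 := hmain y.toNat this
        rw [show ((y.toNat : ℕ) : ℤ) = y by omega] at h2
        exact sigmaSum_mono (by omega) h2
    · -- proper subgroup branch: descend
      obtain ⟨g, hg⟩ := Int.subgroup_cyclic H
      have hmemH : ∀ z : ℤ, z ∈ H ↔ ∃ n : ℤ, n * g = z := by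
        intro z
        rw [hg, AddSubgroup.mem_closure_singleton]
        constructor
        · rintro ⟨n, rfl⟩; exact ⟨n, by rw [smul_eq_mul]⟩
        · rintro ⟨n, rfl⟩; exact ⟨n, by rw [smul_eq_mul]⟩
      set d := g.natAbs with hd
      have hmemE : ∀ x ∈ T', ((x:ℤ) - 1) ∈ H := by
        intro x hx
        rw [hH]
        exact AddSubgroup.subset_closure ⟨x, hx, rfl⟩
      have htwo : ∃ x ∈ T', x ≠ 1 := by
        -- T' has at least two elements at a large enough scale
        obtain ⟨k0, hk0⟩ : ∃ k0 : ℕ, (2:ℝ) ≤ α * k0 := by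
          obtain ⟨k0, hk0⟩ := exists_nat_ge (2 / α)
          exact ⟨k0, by rw [div_le_iff₀ hα0] at hk0; linarith⟩
        have h2 : (2:ℝ) ≤ (cnt T' k0 : ℝ) := le_trans hk0 (hcntT' k0 (by
          by_contra hcon
          push_neg at hcon
          interval_cases k0
          · simp at hk0; linarith))
        have h2' : 2 ≤ cnt T' k0 := by exact_mod_cast h2
        obtain ⟨x, y, hx, hy, hxy⟩ := cnt_two h2'
        rcases eq_or_ne x 1 with rfl | hx1
        · exact ⟨y, hy.2.2, by omega⟩
        · exact ⟨x, hx.2.2, hx1⟩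
      have hd0 : d ≠ 0 := by
        intro h0
        obtain ⟨x, hx, hx1⟩ := htwo
        obtain ⟨n, hn⟩ := (hmemH _).mp (hmemE x hx)
        have hg0 : g = 0 := by omega
        rw [hg0, mul_zero] at hn
        have hx1' : (x:ℤ) = 1 := by omega
        exact hx1 (by exact_mod_cast hx1')
      have hd1 : d ≠ 1 := by
        intro h1
        apply h1H
        rw [hmemH]
        have : g = 1 ∨ g = -1 := by omega
        rcases this with rfl | rfl
        · exact ⟨1, by ring⟩
        · exact ⟨-1, by ring⟩
      have hd2 : 2 ≤ d := by omega
      have hdvd : ∀ x ∈ T', (d:ℤ) ∣ (x:ℤ) - 1 := by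
        intro x hx
        obtain ⟨n, hn⟩ := (hmemH _).mp (hmemE x hx)
        have hgdvd : g ∣ (x:ℤ) - 1 := Dvd.intro_left n hn
        exact (Int.natAbs_dvd).mpr hgdvd
      set S2 := {j : ℕ | (D * (d:ℤ)) * (j:ℤ) ∈ sigmaSum (2 * C) X} with hS2
      have hmap : ∀ x, 1 < x → x ∈ T' → ∃ z : ℕ, 1 ≤ z ∧ x = 1 + d * z ∧ z ∈ S2 := by
        intro x hx1 hx
        have h1 : (d:ℤ) ∣ ((x - 1 : ℕ) : ℤ) := by
          have hc : ((x - 1 : ℕ) : ℤ) = (x:ℤ) - 1 := by omega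
          rw [hc]
          exact hdvd x hx
        obtain ⟨z, hz⟩ := Int.natCast_dvd_natCast.mp h1
        have hzx : x = 1 + d * z := by
          have h2 : x - 1 = d * z := hz
          set w := d * z with hw
          omega
        refine ⟨z, ?_, hzx, ?_⟩
        · rcases Nat.eq_zero_or_pos z with rfl | h
          · exfalso
            rw [Nat.mul_zero] at hz
            omega
          · exact h
        · rw [hS2]
          have h3 := hdiff x hx 1 h1T
          have heq : D * ((x:ℤ) - 1) = D * (d:ℤ) * (z:ℤ) := by
            have : ((x:ℤ) - 1) = (d:ℤ) * z := by
              rw [hzx]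
              push_cast
              ring
            rw [this]
            ring
          simp only [Set.mem_setOf_eq]
          rw [← heq]
          exact h3
      have hwle := wcnt_div_le (by omega : 1 ≤ d) hmap
      -- new density constant
      set c' : ℝ := α + ε with hc'
      have hc'pos : 0 < c' := by rw [hc']; linarith
      have hc'big : 1 < 2 ^ ℓ * c' := by
        have h2e : (2:ℝ) ^ (ℓ + 1) * ε = 1 := by
          rw [hε]
          field_simp
        have hsplit : (2:ℝ) ^ (ℓ + 1) = 2 * 2 ^ ℓ := by ring
        rw [hsplit] at h2e
        have hpow : (0:ℝ) < 2 ^ ℓ := by positivity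
        rw [hc']
        nlinarith
      have hev2 : ∀ᶠ k in Filter.atTop, c' * k ≤ (cnt S2 k : ℝ) := by
        have hαε : 0 < α - ε := by linarith
        set K₀ := Nat.ceil ((1:ℝ) / (α - ε)) + 1 with hK₀
        rw [Filter.eventually_atTop]
        refine ⟨K₀, fun k hk => ?_⟩
        have hk1 : 1 ≤ k := by omega
        have hdk1 : 1 ≤ 1 + d * k := by omega
        have h1 : α * (1 + (d:ℝ) * k) ≤ (cnt T' (1 + d * k) : ℝ) := by
          have hx := hcntT' (1 + d * k) hdk1
          push_cast at hx
          linarith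
        have h2 : cnt T' (1 + d * k) = cnt T' 1 + wcnt T' 1 (d * k) := cnt_add_wcnt T' 1 (d * k)
        have h3 : (wcnt T' 1 (d * k) : ℝ) ≤ (cnt S2 k : ℝ) := by exact_mod_cast hwle k
        have h4 : (cnt T' 1 : ℝ) ≤ 1 := by exact_mod_cast cnt_le T' 1
        have h5 : (K₀ : ℝ) ≤ k := by exact_mod_cast hk
        have h6 : (1:ℝ) / (α - ε) ≤ K₀ := by
          rw [hK₀]
          push_cast
          linarith [Nat.le_ceil ((1:ℝ) / (α - ε))]
        have h7 : 1 ≤ (α - ε) * k := by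
          rw [div_le_iff₀ hαε] at h6
          have : (1:ℝ) ≤ (α - ε) * K₀ := by linarith
          have hKk : (α - ε) * (K₀:ℝ) ≤ (α - ε) * k := by
            apply mul_le_mul_of_nonneg_left h5 (le_of_lt hαε)
          linarith
        have hdR : (2:ℝ) ≤ (d:ℝ) := by exact_mod_cast hd2
        have hkR : (1:ℝ) ≤ (k:ℝ) := by exact_mod_cast hk1
        have h8 : (cnt T' (1 + d * k) : ℝ) = (cnt T' 1 : ℝ) + (wcnt T' 1 (d * k) : ℝ) := by
          exact_mod_cast h2
        -- combine: cnt S2 k ≥ α(1 + dk) - 1 ≥ α d k + α - 1 ≥ (α + ε) k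
        have h9 : α * ((d:ℝ) * k) + α - 1 ≤ (cnt S2 k : ℝ) := by linarith only [h1, h8, h3, h4]
        have hprod : 0 ≤ α * (((d:ℝ) - 2) * k) :=
          mul_nonneg (le_of_lt hα0)
            (mul_nonneg (by linarith only [hdR]) (by linarith only [hkR]))
        have h10 : (α + ε) * k ≤ α * ((d:ℝ) * k) + α - 1 := by
          nlinarith only [hprod, h7, hα0]
        rw [hc']
        linarith only [h9, h10]
      exact ih (D * (d:ℤ))
        (le_trans hD (le_mul_of_one_le_right (by omega : (0:ℤ) ≤ D)
          (by exact_mod_cast (by omega : 1 ≤ d))))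
        (2 * C) (by omega) c' hc'big hev2



-- Final assembly lemmas
lemma le_cnt {X : Set ℕ} {k q : ℕ} (f : ℕ → ℕ)
    (hmem : ∀ j, 0 < j → j ≤ q → (0 < f j ∧ f j ≤ k ∧ f j ∈ X))
    (hinj : ∀ i j, 0 < i → i ≤ q → 0 < j → j ≤ q → f i = f j → i = j) :
    q ≤ cnt X k := by
  classical
  rw [cnt]
  calc q = (Finset.Ioc 0 q).card := by simp
  _ ≤ _ := by
    refine Finset.card_le_card_of_injOn f ?_ ?_
    · intro j hj
      rw [Finset.mem_coe, Finset.mem_Ioc] at hj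
      obtain ⟨h1, h2, h3⟩ := hmem j hj.1 hj.2
      rw [Finset.mem_coe, Finset.mem_filter, Finset.mem_Ioc]
      exact ⟨⟨h1, h2⟩, h3⟩
    · intro i hi j hj he
      rw [Finset.coe_Ioc, Set.mem_Ioc] at hi hj
      exact hinj i j hi.1 hi.2 hj.1 hj.2 he

/-- If `Σ_n(±A)` contains all multiples of `m ≥ 1` then its natural part has nonzero
lower density. -/
lemma multiples_dense {A : Set ℤ} {m : ℤ} (hm : 1 ≤ m) {n : ℕ}
    (hsub : {x : ℤ | ∃ y : ℤ, x = m * y} ⊆ sigmaSum n (pmSet A)) :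
    lowerDensity (intSetToNat (sigmaSum n (pmSet A))) ≠ 0 := by
  set mn := m.toNat with hmn
  have hmn1 : 1 ≤ mn := by omega
  have hsubnat : ∀ j : ℕ, mn * j ∈ intSetToNat (sigmaSum n (pmSet A)) := by
    intro j
    refine hsub ⟨(j : ℤ), ?_⟩
    push_cast
    rw [show ((mn : ℕ) : ℤ) = m by omega]
  refine lowerDensity_ne_zero (c := 1 / (2 * mn)) (by positivity) ?_
  rw [Filter.eventually_atTop]
  refine ⟨2 * mn, fun k hk => ?_⟩
  have h1 : k / mn ≤ cnt (intSetToNat (sigmaSum n (pmSet A))) k := by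
    refine le_cnt (fun j => mn * j) ?_ ?_
    · intro j hj1 hj2
      refine ⟨Nat.mul_pos (by omega) hj1, ?_, hsubnat j⟩
      calc mn * j ≤ mn * (k / mn) := Nat.mul_le_mul_left mn hj2
      _ = (k / mn) * mn := Nat.mul_comm _ _
      _ ≤ k := Nat.div_mul_le_self k mn
    · intro i j _ _ _ _ he
      exact Nat.eq_of_mul_eq_mul_left (by omega) he
  set q := k / mn with hq
  have hq1 : 1 ≤ q := by
    rw [hq]
    exact (Nat.one_le_div_iff (by omega)).mpr (by omega)
  have hkq : k ≤ 2 * (mn * q) := by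
    have hmod := Nat.div_add_mod k mn
    have hr : k % mn < mn := Nat.mod_lt k (by omega)
    set w := mn * q with hw
    have hwmn : mn ≤ w := by
      rw [hw]
      exact Nat.le_mul_of_pos_right mn (by omega)
    omega
  have hcast : (k:ℝ) ≤ 2 * mn * q := by exact_mod_cast by linarith [hkq]
  have h2 : (q:ℝ) ≤ cnt (intSetToNat (sigmaSum n (pmSet A))) k := by exact_mod_cast h1
  have hmnpos : (0:ℝ) < 2 * mn := by positivity
  rw [div_mul_eq_mul_div, div_le_iff₀ hmnpos]
  calc (1:ℝ) * k = k := one_mul _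
  _ ≤ 2 * mn * q := hcast
  _ = q * (2 * mn) := by ring
  _ ≤ _ := by
    apply mul_le_mul_of_nonneg_right h2 (le_of_lt hmnpos)

/-- The hard direction: nonzero lower density produces a full lattice inside some `Σ_M`. -/
lemma main_coset {A : Set ℤ} {n : ℕ}
    (hne : lowerDensity (intSetToNat (sigmaSum n (pmSet A))) ≠ 0) (hn : 1 ≤ n) :
    ∃ m : ℤ, 1 ≤ m ∧ ∃ M : ℕ, 1 ≤ M ∧ ∀ y : ℤ, m * y ∈ sigmaSum M (pmSet A) := by
  obtain ⟨c, hc, hev⟩ := exists_eventual_bound hne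
  obtain ⟨ℓ, hℓ⟩ := pow_unbounded_of_one_lt (1 / c) (one_lt_two (α := ℝ))
  have hcl : 1 < 2 ^ ℓ * c := by
    rw [div_lt_iff₀ hc] at hℓ
    linarith
  have hsets : {j : ℕ | (1:ℤ) * (j:ℤ) ∈ sigmaSum n (pmSet A)} = intSetToNat (sigmaSum n (pmSet A)) := by
    ext j
    simp [intSetToNat]
  refine rec_lemma (pmSet_neg A) ℓ 1 le_rfl n hn c hcl ?_
  rw [hsets]
  exact hev

end SS0

/-- For `A ⊆ ℤ`, the following are equivalent: (i) `A` is sufficiently sparse;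
(ii) for every `n ≥ 1`, `Σ_n(±A)` does not contain `mℤ` for any `m ≥ 1`;
(iii) for every `n ≥ 1`, `Σ_n(±A)` does not contain any coset `mℤ + r` with `m ≥ 1`. -/
theorem sufficiently_sparse_tfae (A : Set ℤ) :
    (SuffSparse A ↔
      ∀ n : ℕ, 1 ≤ n → ∀ m : ℤ, 1 ≤ m →
        ¬ ({x : ℤ | ∃ y : ℤ, x = m * y} ⊆ sigmaSum n (pmSet A))) ∧
    ((∀ n : ℕ, 1 ≤ n → ∀ m : ℤ, 1 ≤ m →
        ¬ ({x : ℤ | ∃ y : ℤ, x = m * y} ⊆ sigmaSum n (pmSet A))) ↔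
      ∀ n : ℕ, 1 ≤ n → ∀ m : ℤ, 1 ≤ m → ∀ r : ℤ,
        ¬ ({x : ℤ | ∃ y : ℤ, x = m * y + r} ⊆ sigmaSum n (pmSet A))) := by
  constructor
  · constructor
    · -- SuffSparse → no full lattice mℤ
      intro hss n hn m hm hsub
      exact SS0.multiples_dense hm hsub (hss n hn)
    · -- no lattice → SuffSparse
      intro hii n hn
      by_contra hne
      obtain ⟨m, hm, M, hM, hmem⟩ := SS0.main_coset hne hn
      exact hii M hM m hm (by
        rintro x ⟨y, rfl⟩
        exact hmem y)
  · constructor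
    · -- (ii) → (iii)
      intro hii n hn m hm r hsub
      refine hii (n + n) (by omega) m hm ?_
      rintro x ⟨y, rfl⟩
      have h1 : m * y + r ∈ sigmaSum n (pmSet A) := hsub ⟨y, rfl⟩
      have h2 : m * 0 + r ∈ sigmaSum n (pmSet A) := hsub ⟨0, rfl⟩
      have h3 := SS0.sigmaSum_add h1 (SS0.sigmaSum_neg (SS0.pmSet_neg A) h2)
      rw [show m * y + r + -(m * 0 + r) = m * y by ring] at h3
      exact h3
    · -- (iii) → (ii)
      intro hiii n hn m hm hsub
      refine hiii n hn m hm 0 ?_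
      rintro x ⟨y, hy⟩
      exact hsub ⟨y, by omega⟩
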